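/- Let k be a field and R a commutative graded k-algebra with grading 𝒜 : ℕ → Submodule k R, 𝒜 0 = k·1. If R is a Hilbert–Serre ring, then the Krull dimension of R is finite: ringKrullDim R < ⊤. -/

import Mathlib

/-- The boundedness condition defining Hilbert–Serre rings: for all `t ∈ (0,1)` the
Poincaré series `∑ F n * tⁿ` converges and `(1 - t) ^ d` times its sum is bounded by a
uniform constant `C > 0`. -/
def HSBound (F : ℕ → ℕ) (d : ℕ) : Prop :=
  ∃ C : ℝ, 0 < C ∧ ∀ t : ℝ, t ∈ Set.Ioo (0 : ℝ) 1 →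
    Summable (fun n => (F n : ℝ) * t ^ n) ∧
      (1 - t) ^ d * (∑' n, (F n : ℝ) * t ^ n) ≤ C

/-- A graded algebra with grading `𝒜` is a *Hilbert–Serre ring* if every graded component
is finite dimensional over `k` and the Poincaré series `∑ dim_k (𝒜 n) tⁿ` satisfies the
boundedness condition `HSBound` for some `d`. -/
def IsHilbertSerre {k R : Type*} [Field k] [CommRing R] [Algebra k R]
    (𝒜 : ℕ → Submodule k R) : Prop :=
  (∀ n, FiniteDimensional k (𝒜 n)) ∧
    ∃ d, HSBound (fun n => Module.finrank k (𝒜 n)) d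

/-- The Hilbert–Serre dimension `d(R)`: the least `d` such that `(1-t)^d P_R(t)` is
bounded on `(0,1)`. -/
noncomputable def hsDim {k R : Type*} [Field k] [CommRing R] [Algebra k R]
    (𝒜 : ℕ → Submodule k R) : ℕ :=
  sInf {d | HSBound (fun n => Module.finrank k (𝒜 n)) d}


open Finset in
lemma hs_inner {k R : Type*} [Field k] [CommRing R] [Algebra k R]
    (q' q : Ideal R) (hq' : q'.IsPrime) (hle : q' ≤ q)
    (a : R) (haq : a ∈ q) (haq' : a ∉ q')
    {ι : Type*} [Fintype ι] (w : ι → R)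
    (hw : ∀ c : ι → k, (∑ j, c j • w j) ∈ q → ∀ j, c j = 0) :
    ∀ (N : ℕ) (c : Fin (N + 1) → ι → k),
      (∑ i : Fin (N + 1), a ^ (i : ℕ) * ∑ j, c i j • w j) ∈ q' → ∀ i j, c i j = 0 := by
  intro N
  induction N with
  | zero =>
    intro c hc i j
    rw [Fin.sum_univ_one] at hc
    norm_num at hc
    have h := hw (c 0) (hle hc)
    have : i = 0 := Fin.fin_one_eq_zero i
    rw [this]; exact h j
  | succ N ih =>
    intro c hc
    rw [Fin.sum_univ_succ] at hc
    have hrw : (∑ i : Fin (N + 1), a ^ ((i.succ : Fin (N + 2)) : ℕ) * ∑ j, c i.succ j • w j)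
        = a * ∑ i : Fin (N + 1), a ^ (i : ℕ) * ∑ j, c i.succ j • w j := by
      rw [Finset.mul_sum]
      refine Finset.sum_congr rfl fun i _ => ?_
      rw [Fin.val_succ, pow_succ, mul_comm (a ^ (i : ℕ)) a, mul_assoc]
    rw [hrw] at hc
    simp only [Fin.val_zero, pow_zero, one_mul] at hc
    -- hc : (∑ j, c 0 j • w j) + a * U ∈ q'
    have hS0 : (∑ j, c 0 j • w j) ∈ q := by
      have h1 : a * (∑ i : Fin (N + 1), a ^ (i : ℕ) * ∑ j, c i.succ j • w j) ∈ q :=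
        Ideal.mul_mem_right _ _ haq
      have h2 := hle hc
      simpa using q.sub_mem h2 h1
    have hc0 : ∀ j, c 0 j = 0 := hw _ hS0
    have hz : (∑ j, c 0 j • w j) = 0 := by simp [hc0]
    rw [hz, zero_add] at hc
    have hU : (∑ i : Fin (N + 1), a ^ (i : ℕ) * ∑ j, c i.succ j • w j) ∈ q' :=
      (hq'.mem_or_mem hc).resolve_left haq'
    have htail := ih (fun i j => c i.succ j) hU
    intro i j
    refine Fin.cases ?_ ?_ i
    · exact hc0 j
    · intro i'; exact htail i' j

open Finset in
lemma hs_chain {k R : Type*} [Field k] [CommRing R] [Algebra k R] :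
    ∀ (m : ℕ) (q : Fin (m + 1) → Ideal R), (∀ i, (q i).IsPrime) → StrictMono q →
    ∃ a : Fin m → R,
      ∀ (n : ℕ) (g : (Fin m → Fin (n + 1)) → k),
        (∑ α : Fin m → Fin (n + 1), g α • ∏ i, a i ^ (α i : ℕ)) ∈ q 0 → ∀ α, g α = 0 := by
  intro m
  induction m with
  | zero =>
    intro q hq _
    refine ⟨Fin.elim0, fun n g hg α => ?_⟩
    have hα : ∀ β : Fin 0 → Fin (n + 1), β = α := fun β => Subsingleton.elim _ _
    have hsum : (∑ β : Fin 0 → Fin (n + 1), g β • ∏ i, Fin.elim0 i ^ (β i : ℕ))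
        = g α • (1 : R) := by
      rw [Fintype.sum_subsingleton _ α]
      simp
    rw [hsum] at hg
    by_contra hne
    have h1 : (1 : R) ∈ q 0 := by
      have := Submodule.smul_mem (q 0) (algebraMap k R (g α)⁻¹) hg
      rw [smul_eq_mul, Algebra.smul_def, ← mul_assoc, ← map_mul,
        inv_mul_cancel₀ hne, map_one, one_mul] at this
      exact this
    exact (hq 0).ne_top ((Ideal.eq_top_iff_one _).mpr h1)
  | succ m ih =>
    intro q hq hmono
    obtain ⟨a', ha'⟩ := ih (fun i => q i.succ) (fun i => hq _)
      (fun i j hij => hmono (Fin.succ_lt_succ_iff.mpr hij))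
    have h01 : q 0 < q 1 := hmono (by norm_num [Fin.lt_iff_val_lt_val])
    obtain ⟨a0, ha0q1, ha0q0⟩ := SetLike.exists_of_lt h01
    refine ⟨Fin.cons a0 a', fun n g hg => ?_⟩
    -- reindex the sum
    have key : (∑ α : Fin (m + 1) → Fin (n + 1), g α • ∏ i, (Fin.cons a0 a' : Fin (m+1) → R) i ^ (α i : ℕ))
        = ∑ i : Fin (n + 1), a0 ^ (i : ℕ) *
            ∑ α' : Fin m → Fin (n + 1), g (Fin.cons i α') • ∏ i', a' i' ^ (α' i' : ℕ) := by
      rw [← Equiv.sum_comp (Fin.consEquiv (fun _ : Fin (m+1) => Fin (n+1)))]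
      rw [Fintype.sum_prod_type]
      refine Finset.sum_congr rfl fun i _ => ?_
      rw [Finset.mul_sum]
      refine Finset.sum_congr rfl fun α' _ => ?_
      have hcons : (Fin.consEquiv (fun _ : Fin (m+1) => Fin (n+1))) (i, α') = Fin.cons i α' := rfl
      rw [hcons, Fin.prod_univ_succ]
      simp only [Fin.cons_zero, Fin.cons_succ]
      rw [mul_smul_comm]
    rw [key] at hg
    have hz := hs_inner (q 0) (q 1) (hq 0) h01.le a0 ha0q1 ha0q0
      (fun α' : Fin m → Fin (n + 1) => ∏ i', a' i' ^ (α' i' : ℕ)) (ha' n) n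
      (fun i α' => g (Fin.cons i α')) hg
    intro α
    have : α = Fin.cons (α 0) (fun i => α i.succ) := (Fin.cons_self_tail α).symm
    rw [this]
    exact hz (α 0) _

section filt
variable {k R : Type*} [Field k] [CommRing R] [Algebra k R] (𝒜 : ℕ → Submodule k R)

/-- `filt N` is the span of graded pieces up to degree `N`. -/
noncomputable abbrev hsFilt (N : ℕ) : Submodule k R := (Finset.range (N + 1)).sup 𝒜

lemma hsFilt_mono {N N' : ℕ} (h : N ≤ N') : hsFilt 𝒜 N ≤ hsFilt 𝒜 N' :=
  Finset.sup_mono (Finset.range_subset_range.mpr (by omega))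

lemma le_hsFilt {j N : ℕ} (h : j ≤ N) : 𝒜 j ≤ hsFilt 𝒜 N :=
  Finset.le_sup (Finset.mem_range.mpr (by omega))

variable [GradedAlgebra 𝒜]

lemma hsFilt_one_mem (N : ℕ) : (1 : R) ∈ hsFilt 𝒜 N :=
  le_hsFilt 𝒜 (Nat.zero_le N) (SetLike.one_mem_graded 𝒜)

lemma hsFilt_mul {N N' : ℕ} {x y : R} (hx : x ∈ hsFilt 𝒜 N) (hy : y ∈ hsFilt 𝒜 N') :
    x * y ∈ hsFilt 𝒜 (N + N') := by
  have hfe : ∀ M : ℕ, hsFilt 𝒜 M = ⨆ j : {j : ℕ // j ∈ Finset.range (M + 1)}, 𝒜 j := by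
    intro M
    rw [hsFilt, Finset.sup_eq_iSup, iSup_subtype']
  rw [hfe] at hx hy
  refine Submodule.iSup_induction (x := x) _ hx (motive := fun z => z * y ∈ hsFilt 𝒜 (N + N')) ?_
    (by simp) ?_
  · intro j x hxj
    refine Submodule.iSup_induction (x := y) _ hy (motive := fun z => x * z ∈ hsFilt 𝒜 (N + N')) ?_
      (by simp) ?_
    · intro j' y hyj'
      have hmul := SetLike.mul_mem_graded hxj hyj'
      have hj := Finset.mem_range.mp j.2
      have hj' := Finset.mem_range.mp j'.2
      exact le_hsFilt 𝒜 (by omega) hmul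
    · intro y₁ y₂ h1 h2
      rw [mul_add]; exact (hsFilt 𝒜 (N + N')).add_mem h1 h2
  · intro x₁ x₂ h1 h2
    rw [add_mul]; exact (hsFilt 𝒜 (N + N')).add_mem h1 h2

lemma hsFilt_pow {D : ℕ} {a : R} (ha : a ∈ hsFilt 𝒜 D) (t : ℕ) :
    a ^ t ∈ hsFilt 𝒜 (t * D) := by
  induction t with
  | zero => simpa using hsFilt_one_mem 𝒜 0
  | succ t iht =>
    have h2 := hsFilt_mul 𝒜 iht ha
    have heq : (t + 1) * D = t * D + D := by ring
    rw [pow_succ, heq]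
    exact h2

lemma hsFilt_prod {E : ℕ} (m : ℕ) (f : Fin m → R) (hf : ∀ i, f i ∈ hsFilt 𝒜 E) :
    ∏ i, f i ∈ hsFilt 𝒜 (m * E) := by
  induction m with
  | zero => simpa using hsFilt_one_mem 𝒜 0
  | succ m ihm =>
    have h2 := hsFilt_mul 𝒜 (hf 0) (ihm (fun i => f i.succ) (fun i => hf i.succ))
    have heq : (m + 1) * E = E + m * E := by ring
    rw [heq, Fin.prod_univ_succ]
    exact h2

lemma hsFilt_exists (x : R) : ∃ N, x ∈ hsFilt 𝒜 N := by
  classical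
  refine ⟨(DirectSum.decompose 𝒜 x).support.sup id, ?_⟩
  have hmem : ∀ j ∈ (DirectSum.decompose 𝒜 x).support,
      (DirectSum.decompose 𝒜 x j : R) ∈ hsFilt 𝒜 ((DirectSum.decompose 𝒜 x).support.sup id) :=
    fun j hj => le_hsFilt 𝒜 (Finset.le_sup (f := id) hj) (DirectSum.decompose 𝒜 x j).2
  have hsum := Submodule.sum_mem _ hmem
  rwa [DirectSum.sum_support_decompose 𝒜 x] at hsum

omit [GradedAlgebra 𝒜] in
lemma hsFilt_findim (hfd : ∀ n, FiniteDimensional k (𝒜 n)) (N : ℕ) :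
    FiniteDimensional k (hsFilt 𝒜 N) ∧
      Module.finrank k (hsFilt 𝒜 N) ≤ ∑ j ∈ Finset.range (N + 1), Module.finrank k (𝒜 j) := by
  induction N with
  | zero =>
    have h : hsFilt 𝒜 0 = 𝒜 0 := by rw [hsFilt, Finset.range_one, Finset.sup_singleton]
    rw [h, Finset.range_one, Finset.sum_singleton]
    exact ⟨hfd 0, le_rfl⟩
  | succ N ihN =>
    obtain ⟨ih1, ih2⟩ := ihN
    have hstep : hsFilt 𝒜 (N + 1) = hsFilt 𝒜 N ⊔ 𝒜 (N + 1) := by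
      rw [hsFilt, Finset.range_add_one, Finset.sup_insert, sup_comm]
    haveI := ih1
    haveI := hfd (N + 1)
    constructor
    · rw [hstep]; exact Submodule.finiteDimensional_sup _ _
    · rw [hstep, Finset.sum_range_succ]
      calc Module.finrank k ↥(hsFilt 𝒜 N ⊔ 𝒜 (N + 1))
          ≤ Module.finrank k (hsFilt 𝒜 N) + Module.finrank k (𝒜 (N + 1)) :=
            Submodule.finrank_add_le_finrank_add_finrank _ _
        _ ≤ _ := add_le_add ih2 le_rfl

end filt

lemma hs_growth {F : ℕ → ℕ} {d : ℕ} (h : HSBound F d) :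
    ∃ C : ℝ, 0 < C ∧ ∀ N : ℕ,
      (∑ j ∈ Finset.range (N + 1), (F j : ℝ)) ≤ C * (N + 1 : ℝ) ^ (d + 1) := by
  obtain ⟨C, hC, hB⟩ := h
  refine ⟨C * 2 ^ (d + 1), by positivity, fun N => ?_⟩
  set u : ℝ := (N : ℝ) + 2 with hu
  have hu2 : (2 : ℝ) ≤ u := by rw [hu]; linarith [Nat.cast_nonneg (α := ℝ) N]
  have hu0 : (0 : ℝ) < u := by linarith
  set t : ℝ := 1 - 1 / u with ht
  have hiu : 0 < 1 / u := by positivity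
  have hiu2 : 1 / u ≤ 1 / 2 := by
    apply one_div_le_one_div_of_le <;> linarith
  have ht0 : 0 < t := by rw [ht]; linarith
  have ht1 : t < 1 := by rw [ht]; linarith
  obtain ⟨hsum, hle⟩ := hB t ⟨ht0, ht1⟩
  have h1 : (∑ j ∈ Finset.range (N + 1), (F j : ℝ) * t ^ j)
      ≤ ∑' n, (F n : ℝ) * t ^ n :=
    Summable.sum_le_tsum _ (fun i _ => by positivity) hsum
  have h2 : (∑ j ∈ Finset.range (N + 1), (F j : ℝ)) * t ^ N
      ≤ ∑ j ∈ Finset.range (N + 1), (F j : ℝ) * t ^ j := by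
    rw [Finset.sum_mul]
    refine Finset.sum_le_sum fun j hj => ?_
    have hjN : j ≤ N := by simpa [Nat.lt_succ_iff] using hj
    have hpow := pow_le_pow_of_le_one ht0.le ht1.le hjN
    have hF : (0 : ℝ) ≤ (F j : ℝ) := by positivity
    nlinarith
  have h3 : (∑' n, (F n : ℝ) * t ^ n) ≤ C * u ^ d := by
    have h1t : 1 - t = 1 / u := by rw [ht]; ring
    have hud : (0:ℝ) < u ^ d := by positivity
    rw [h1t, one_div, inv_pow] at hle
    calc (∑' n, (F n : ℝ) * t ^ n)
        = u ^ d * ((u ^ d)⁻¹ * ∑' n, (F n : ℝ) * t ^ n) := by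
          rw [← mul_assoc, mul_inv_cancel₀ (ne_of_gt hud), one_mul]
      _ ≤ u ^ d * C := mul_le_mul_of_nonneg_left hle hud.le
      _ = C * u ^ d := mul_comm _ _
  have h4 : 1 / u ≤ t ^ N := by
    have hb := one_add_mul_le_pow (a := -(1 / u)) (by linarith) N
    have hteq : (1 + -(1 / u)) = t := by rw [ht]; ring
    rw [hteq] at hb
    have hkey : ((N : ℝ) + 1) * (1 / u) ≤ 1 := by
      rw [mul_one_div, div_le_one hu0, hu]; linarith
    nlinarith
  -- combine
  set S : ℝ := ∑ j ∈ Finset.range (N + 1), (F j : ℝ) with hS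
  have hS0 : 0 ≤ S := Finset.sum_nonneg fun j _ => by positivity
  have h5 : S * (1 / u) ≤ C * u ^ d := by
    have := mul_le_mul_of_nonneg_left h4 hS0
    linarith [h1, h2]
  have h6 : S ≤ C * u ^ (d + 1) := by
    have := mul_le_mul_of_nonneg_right h5 hu0.le
    rw [mul_assoc, one_div, inv_mul_cancel₀ (ne_of_gt hu0), mul_one] at this
    calc S ≤ C * u ^ d * u := this
      _ = C * u ^ (d + 1) := by ring
  have h7 : u ^ (d + 1) ≤ (2 * ((N : ℝ) + 1)) ^ (d + 1) := by
    apply pow_le_pow_left₀ hu0.le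
    rw [hu]; linarith [Nat.cast_nonneg (α := ℝ) N]
  calc S ≤ C * u ^ (d + 1) := h6
    _ ≤ C * (2 * ((N : ℝ) + 1)) ^ (d + 1) :=
        mul_le_mul_of_nonneg_left h7 hC.le
    _ = C * 2 ^ (d + 1) * ((N : ℝ) + 1) ^ (d + 1) := by rw [mul_pow]; ring

set_option maxHeartbeats 1000000

theorem ringKrullDim_lt_top_of_hilbertSerre {k R : Type*} [Field k] [CommRing R] [Algebra k R]
    (𝒜 : ℕ → Submodule k R) [GradedAlgebra 𝒜] (h0 : 𝒜 0 = 1)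
    (hHS : IsHilbertSerre 𝒜) :
    ringKrullDim R < ⊤ := by
  classical
  obtain ⟨hfd, d, hbd⟩ := hHS
  obtain ⟨C, hC, hgr⟩ := hs_growth hbd
  have hlen : ∀ l : LTSeries (PrimeSpectrum R), l.length ≤ d + 1 := by
    intro l
    by_contra hlong
    push_neg at hlong
    set m := l.length with hm
    have hq : ∀ i : Fin (m + 1), ((l.toFun i).asIdeal).IsPrime := fun i => (l.toFun i).isPrime
    have hmono : StrictMono (fun i : Fin (m + 1) => (l.toFun i).asIdeal) := fun i j hij =>
      (PrimeSpectrum.asIdeal_lt_asIdeal _ _).mpr (l.strictMono hij)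
    obtain ⟨a, ha⟩ := hs_chain (k := k) m (fun i => (l.toFun i).asIdeal) hq hmono
    choose Dm hDm using fun i => hsFilt_exists 𝒜 (a i)
    set D : ℕ := Finset.univ.sup Dm with hD
    have haD : ∀ i, a i ∈ hsFilt 𝒜 D := fun i =>
      hsFilt_mono 𝒜 (Finset.le_sup (Finset.mem_univ i)) (hDm i)
    set K : ℕ := m * D + 1 with hK
    have key : ∀ n : ℕ, ((n : ℝ) + 1) ^ m ≤ (C * (K : ℝ) ^ (d + 1)) * ((n : ℝ) + 1) ^ (d + 1) := by
      intro n
      set B : ℕ := m * (n * D) with hB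
      -- monomials live in filtration B
      have hmem : ∀ α : Fin m → Fin (n + 1), (∏ i, a i ^ (α i : ℕ)) ∈ hsFilt 𝒜 B := by
        intro α
        refine hsFilt_prod 𝒜 m _ fun i => ?_
        have h1 : a i ^ (α i : ℕ) ∈ hsFilt 𝒜 ((α i : ℕ) * D) := hsFilt_pow 𝒜 (haD i) _
        exact hsFilt_mono 𝒜 (Nat.mul_le_mul_right D (Fin.is_le _)) h1
      -- linear independence
      have hLI : LinearIndependent k
          (fun α : Fin m → Fin (n + 1) => (∏ i, a i ^ (α i : ℕ) : R)) := by
        rw [Fintype.linearIndependent_iff]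
        intro g hg
        exact ha n g (hg ▸ (Submodule.zero_mem _))
      obtain ⟨hFD, hfr⟩ := hsFilt_findim 𝒜 hfd B
      haveI := hFD
      have hLI' : LinearIndependent k
          (fun α : Fin m → Fin (n + 1) => (⟨∏ i, a i ^ (α i : ℕ), hmem α⟩ : hsFilt 𝒜 B)) :=
        LinearIndependent.of_comp (hsFilt 𝒜 B).subtype hLI
      have hcard := hLI'.fintype_card_le_finrank
      rw [Fintype.card_fun, Fintype.card_fin, Fintype.card_fin] at hcard
      -- hcard : (n+1)^m ≤ finrank (hsFilt 𝒜 B)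
      have hnat : (n + 1) ^ m ≤ ∑ j ∈ Finset.range (B + 1), Module.finrank k (𝒜 j) :=
        le_trans hcard hfr
      have hreal : ((n : ℝ) + 1) ^ m ≤ C * ((B : ℝ) + 1) ^ (d + 1) := by
        have hcast : (((n + 1) ^ m : ℕ) : ℝ)
            ≤ ∑ j ∈ Finset.range (B + 1), ((Module.finrank k (𝒜 j) : ℕ) : ℝ) := by
          rw [← Nat.cast_sum]
          exact_mod_cast hnat
        have := le_trans hcast (hgr B)
        push_cast at this
        convert this using 2 <;> push_cast <;> ring
      refine le_trans hreal ?_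
      have hBK : ((B : ℝ) + 1) ≤ (K : ℝ) * ((n : ℝ) + 1) := by
        have : B + 1 ≤ K * (n + 1) := by rw [hB, hK]; nlinarith
        exact_mod_cast this
      have hpow : ((B : ℝ) + 1) ^ (d + 1) ≤ ((K : ℝ) * ((n : ℝ) + 1)) ^ (d + 1) := by
        apply pow_le_pow_left₀ (by positivity) hBK
      calc C * ((B : ℝ) + 1) ^ (d + 1) ≤ C * ((K : ℝ) * ((n : ℝ) + 1)) ^ (d + 1) :=
            mul_le_mul_of_nonneg_left hpow hC.le
        _ = (C * (K : ℝ) ^ (d + 1)) * ((n : ℝ) + 1) ^ (d + 1) := by rw [mul_pow]; ring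
    -- contradiction
    set A : ℝ := C * (K : ℝ) ^ (d + 1) with hA
    obtain ⟨n, hn⟩ := exists_nat_gt A
    have h1 := key n
    have hmge : d + 2 ≤ m := by omega
    have hn1 : (1 : ℝ) ≤ (n : ℝ) + 1 := by linarith [Nat.cast_nonneg (α := ℝ) n]
    have hpows : ((n : ℝ) + 1) ^ (d + 1) * ((n : ℝ) + 1) ≤ ((n : ℝ) + 1) ^ m := by
      rw [← pow_succ]
      exact pow_le_pow_right₀ hn1 (by omega)
    have hposd : (0 : ℝ) < ((n : ℝ) + 1) ^ (d + 1) := by positivity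
    have : (n : ℝ) + 1 ≤ A := by
      have h2 : ((n : ℝ) + 1) ^ (d + 1) * ((n : ℝ) + 1) ≤ A * ((n : ℝ) + 1) ^ (d + 1) :=
        le_trans hpows h1
      nlinarith
    linarith
  -- conclude
  have hle : ringKrullDim R ≤ ((d + 1 : ℕ) : WithBot ℕ∞) := by
    rw [ringKrullDim, Order.krullDim]
    exact iSup_le fun l => by exact_mod_cast hlen l
  refine lt_of_le_of_lt hle ?_
  rw [← WithBot.coe_top]
  exact WithBot.coe_lt_coe.mpr (WithTop.coe_lt_top (d + 1 : ℕ))
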